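/- Let c := e/(e-1), p a real number with p > 1, m an integer with m ≥ 2, n a positive integer, and t_1,...,t_n, r_1,...,r_n positive reals. If Σ_{i=1}^n (r_i·t_i - (m-1)·log_p(t_i)) ≤ (m-1)·Σ_{i=1}^n r_i, then Σ_{i=1}^n r_i·t_i ≤ c·(m-1)·[Σ_{i=1}^n r_i + log_p((m-1)^n / (r_1···r_n · (log p)^n))]. -/

import Mathlib

open Real

/-- The multivariate inequality (Lemma on `(⋆⋆) ⇒ (⋆⋆⋆)` contrapositive):
if `∑ (rᵢtᵢ - (m-1)·log_p tᵢ) ≤ (m-1)·∑ rᵢ` then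
`∑ rᵢtᵢ ≤ c(m-1)[∑ rᵢ + log_p((m-1)^n / (r₁⋯rₙ (log p)^n))]` with `c = e/(e-1)`. -/
theorem stmt1 (n : ℕ) (hn : 0 < n) (p : ℝ) (hp : 1 < p) (m : ℤ) (hm : 2 ≤ m)
    (t r : Fin n → ℝ) (ht : ∀ i, 0 < t i) (hr : ∀ i, 0 < r i)
    (h : ∑ i, (r i * t i - ((m : ℝ) - 1) * Real.logb p (t i)) ≤ ((m : ℝ) - 1) * ∑ i, r i) :
    ∑ i, r i * t i ≤ (Real.exp 1 / (Real.exp 1 - 1)) * ((m : ℝ) - 1) *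
      ((∑ i, r i) +
        Real.logb p (((m : ℝ) - 1) ^ n / ((∏ i, r i) * (Real.log p) ^ n))) := by
  have hL : 0 < Real.log p := Real.log_pos hp
  have hM : (1:ℝ) ≤ (m : ℝ) - 1 := by
    have : (2:ℝ) ≤ (m : ℝ) := by exact_mod_cast hm
    linarith
  set M : ℝ := (m : ℝ) - 1 with hMdef
  set L : ℝ := Real.log p with hLdef
  set E : ℝ := Real.exp 1 with hEdef
  have hM0 : (0:ℝ) < M := by linarith
  have hE : 1 < E := by
    rw [hEdef]
    have := Real.exp_one_gt_d9
    linarith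
  have hE0 : (0:ℝ) < E := by linarith
  have key : ∀ i, M * Real.logb p (t i) ≤ r i * t i / E + M * Real.logb p (M / (r i * L)) := by
    intro i
    have hri := hr i
    have hti := ht i
    have ha : (0:ℝ) < E * M / (r i * L) := by positivity
    have h1 : Real.log (t i / (E * M / (r i * L))) ≤ t i / (E * M / (r i * L)) - 1 :=
      Real.log_le_sub_one_of_pos (by positivity)
    rw [Real.log_div (ne_of_gt hti) (ne_of_gt ha)] at h1
    have h2 : Real.log (E * M / (r i * L)) = 1 + Real.log (M / (r i * L)) := by
      rw [mul_div_assoc, Real.log_mul (ne_of_gt hE0) (by positivity), hEdef, Real.log_exp]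
    have h3 : Real.log (t i) ≤ t i * (r i * L) / (E * M) + Real.log (M / (r i * L)) := by
      have heq : t i / (E * M / (r i * L)) = t i * (r i * L) / (E * M) := by
        field_simp
      rw [heq, h2] at h1
      linarith
    have h4 := mul_le_mul_of_nonneg_left h3 (le_of_lt (div_pos hM0 hL))
    rw [Real.logb, Real.logb, ← hLdef]
    calc M * (Real.log (t i) / L) = (M / L) * Real.log (t i) := by ring
      _ ≤ (M / L) * (t i * (r i * L) / (E * M) + Real.log (M / (r i * L))) := h4
      _ = r i * t i / E + M * (Real.log (M / (r i * L)) / L) := by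
          field_simp
  have hsum : ∑ i, M * Real.logb p (t i) ≤
      (∑ i, r i * t i) / E + M * ∑ i, Real.logb p (M / (r i * L)) := by
    calc ∑ i, M * Real.logb p (t i)
        ≤ ∑ i, (r i * t i / E + M * Real.logb p (M / (r i * L))) :=
          Finset.sum_le_sum (fun i _ => key i)
      _ = (∑ i, r i * t i) / E + M * ∑ i, Real.logb p (M / (r i * L)) := by
          rw [Finset.sum_add_distrib, ← Finset.sum_div, Finset.mul_sum]
  have hprod : M ^ n / ((∏ i, r i) * L ^ n) = ∏ i, (M / (r i * L)) := by
    rw [Finset.prod_div_distrib, Finset.prod_const, Finset.prod_mul_distrib,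
      Finset.prod_const, Finset.card_univ, Fintype.card_fin]
  have hlog : Real.logb p (M ^ n / ((∏ i, r i) * L ^ n)) =
      ∑ i, Real.logb p (M / (r i * L)) := by
    rw [hprod, Real.logb, Real.log_prod (fun i _ => by
      have := hr i; positivity), Finset.sum_div]
    simp [Real.logb, hLdef]
  have hS : ∑ i, r i * t i ≤ M * (∑ i, r i) + ∑ i, M * Real.logb p (t i) := by
    have := Finset.sum_sub_distrib (f := fun i => r i * t i)
      (g := fun i => M * Real.logb p (t i)) (s := (Finset.univ : Finset (Fin n)))
    rw [this] at h
    linarith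
  set S : ℝ := ∑ i, r i * t i
  set R : ℝ := ∑ i, r i
  set B : ℝ := ∑ i, Real.logb p (M / (r i * L))
  have hcomb : S ≤ M * R + S / E + M * B := by
    calc S ≤ M * R + ∑ i, M * Real.logb p (t i) := hS
      _ ≤ M * R + (S / E + M * B) := by exact add_le_add_right hsum _
      _ = M * R + S / E + M * B := by ring
  rw [hlog]
  rw [div_mul_eq_mul_div, div_mul_eq_mul_div, le_div_iff₀ (by linarith : (0:ℝ) < E - 1)]
  have hSE : S / E * E = S := div_mul_cancel₀ S (ne_of_gt hE0)
  have h5 : S * E ≤ M * R * E + S + M * B * E := by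
    calc S * E ≤ (M * R + S / E + M * B) * E :=
          mul_le_mul_of_nonneg_right hcomb (le_of_lt hE0)
      _ = M * R * E + S / E * E + M * B * E := by ring
      _ = M * R * E + S + M * B * E := by rw [hSE]
  nlinarith [h5]
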